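/- Let h be a C² function on [a,b] with h' monotone and |h'(x)| > A > 0 on [a,b], and let φ be C¹ on [a,b]. Then |∫_a^b e^{ih(x)} φ(x) dx| ≤ c·A^{-1}·(|φ(b)| + ∫_a^b |φ'(x)| dx) for an absolute constant c. -/

import Mathlib

open MeasureTheory intervalIntegral Set Filter Topology

lemma aux_deriv_nonneg_of_monotoneOn {f : ℝ → ℝ} {a b x d : ℝ} (hx : x ∈ Set.Ioo a b)
    (hm : MonotoneOn f (Set.Ioo a b)) (hd : HasDerivAt f d x) : 0 ≤ d := by
  have h1 : HasDerivWithinAt f d (Set.Ioi x) x := hd.hasDerivWithinAt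
  rw [hasDerivWithinAt_iff_tendsto_slope] at h1
  have hIoi : Set.Ioi x \ {x} = Set.Ioi x := Set.diff_singleton_eq_self (by simp)
  rw [hIoi] at h1
  refine ge_of_tendsto h1 ?_
  filter_upwards [nhdsWithin_le_nhds (Ioo_mem_nhds hx.1 hx.2), self_mem_nhdsWithin] with y hy hy'
  rw [slope_def_field]
  have hxy : x < y := hy'
  exact div_nonneg (sub_nonneg.2 (hm hx hy hxy.le)) (by linarith)

lemma kernel_pos {a b A : ℝ} (hab : a ≤ b) (hA : 0 < A) (h g g' : ℝ → ℝ)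
    (hhc : ContinuousOn h (Set.Icc a b))
    (hgc : ContinuousOn g (Set.Icc a b))
    (hg'c : ContinuousOn g' (Set.Icc a b))
    (hd : ∀ t ∈ Set.Ioo a b, HasDerivAt h (g t) t)
    (hd2 : ∀ t ∈ Set.Ioo a b, HasDerivAt g (g' t) t)
    (hge : ∀ t ∈ Set.Icc a b, A ≤ g t)
    (hsgn : (∀ t ∈ Set.Ioo a b, 0 ≤ g' t) ∨ (∀ t ∈ Set.Ioo a b, g' t ≤ 0)) :
    ‖∫ t in a..b, Complex.exp (Complex.I * (h t : ℂ))‖ ≤ 3 / A := by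
  rcases eq_or_lt_of_le hab with rfl | hab'
  · simp; positivity
  set e : ℝ → ℂ := fun t => Complex.exp (Complex.I * (h t : ℂ)) with he_def
  set ψ : ℝ → ℂ := fun t => -Complex.I * ((g t : ℂ))⁻¹ with hψ_def
  set w : ℝ → ℂ := fun t => -Complex.I * (-(((g t : ℂ)) ^ 2)⁻¹ * (g' t : ℂ)) with hw_def
  have hgpos : ∀ t ∈ Set.Icc a b, 0 < g t := fun t ht => lt_of_lt_of_le hA (hge t ht)
  have hgne : ∀ t ∈ Set.Icc a b, (g t : ℂ) ≠ 0 := fun t ht =>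
    Complex.ofReal_ne_zero.mpr (hgpos t ht).ne'
  -- continuity
  have hgcC : ContinuousOn (fun t => (g t : ℂ)) (Set.Icc a b) :=
    Complex.continuous_ofReal.comp_continuousOn hgc
  have hg'cC : ContinuousOn (fun t => (g' t : ℂ)) (Set.Icc a b) :=
    Complex.continuous_ofReal.comp_continuousOn hg'c
  have he_cont : ContinuousOn e (Set.Icc a b) :=
    Complex.continuous_exp.comp_continuousOn
      (continuousOn_const.mul (Complex.continuous_ofReal.comp_continuousOn hhc))
  have hψ_cont : ContinuousOn ψ (Set.Icc a b) :=
    continuousOn_const.mul (hgcC.inv₀ hgne)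
  have hw_cont : ContinuousOn w (Set.Icc a b) :=
    continuousOn_const.mul ((((hgcC.pow 2).inv₀ fun t ht => pow_ne_zero _ (hgne t ht)).neg).mul hg'cC)
  -- norms
  have he_norm : ∀ t, ‖e t‖ = 1 := by
    intro t
    simp [he_def, Complex.norm_exp]
  have hψ_norm : ∀ t ∈ Set.Icc a b, ‖ψ t‖ ≤ 1 / A := by
    intro t ht
    have : ‖ψ t‖ = |g t|⁻¹ := by
      simp [hψ_def]
    rw [this, abs_of_pos (hgpos t ht)]
    rw [one_div]
    exact inv_anti₀ hA (hge t ht)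
  -- derivatives
  have hde : ∀ t ∈ Set.Ioo a b, HasDerivAt e (Complex.I * (g t : ℂ) * e t) t := by
    intro t ht
    have h1 : HasDerivAt (fun y => ((h y : ℝ) : ℂ)) (g t) t := (hd t ht).ofReal_comp
    have h2 := (h1.const_mul Complex.I).cexp
    convert h2 using 1
    ring
  have hdψ : ∀ t ∈ Set.Ioo a b, HasDerivAt ψ (w t) t := by
    intro t ht
    have h1 : HasDerivAt (fun y => ((g y : ℝ) : ℂ)) (g' t) t := (hd2 t ht).ofReal_comp
    have h2 := ((hasDerivAt_inv (hgne t (Set.Ioo_subset_Icc_self ht))).comp t h1).const_mul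
      (-Complex.I)
    simpa [hψ_def, hw_def, Function.comp] using h2
  have hkey : ∀ t ∈ Set.Icc a b, ψ t * (Complex.I * (g t : ℂ) * e t) = e t := by
    intro t ht
    have hne := hgne t ht
    have h1 : ψ t * (Complex.I * (g t : ℂ) * e t)
        = (-Complex.I * Complex.I) * (((g t : ℂ))⁻¹ * (g t : ℂ)) * e t := by
      rw [hψ_def]; ring
    rw [h1, inv_mul_cancel₀ hne, neg_mul, Complex.I_mul_I, neg_neg]
    simp
  set P : ℝ → ℂ := fun t => ψ t * e t with hP_def
  have hP : ∀ t ∈ Set.Ioo a b, HasDerivAt P (w t * e t + e t) t := by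
    intro t ht
    have h1 := (hdψ t ht).mul (hde t ht)
    rwa [hkey t (Set.Ioo_subset_Icc_self ht)] at h1
  have hwe_int : IntervalIntegrable (fun t => w t * e t) volume a b := by
    apply ContinuousOn.intervalIntegrable
    rw [Set.uIcc_of_le hab]
    exact hw_cont.mul he_cont
  have he_int : IntervalIntegrable e volume a b := by
    apply ContinuousOn.intervalIntegrable
    rw [Set.uIcc_of_le hab]
    exact he_cont
  have hFTC : (∫ t in a..b, (w t * e t + e t)) = P b - P a := by
    apply integral_eq_sub_of_hasDeriv_right_of_le hab (hψ_cont.mul he_cont)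
      (fun t ht => (hP t ht).hasDerivWithinAt) (hwe_int.add he_int)
  rw [integral_add hwe_int he_int] at hFTC
  have heq : (∫ t in a..b, e t) = P b - P a - ∫ t in a..b, w t * e t := by
    rw [← hFTC]; ring
  -- bound the variation integral
  set N : ℝ → ℝ := fun t => g' t / g t ^ 2 with hN_def
  set M : ℝ → ℝ := fun t => |g' t| / g t ^ 2 with hM_def
  have hQd : ∀ t ∈ Set.Ioo a b, HasDerivAt (fun y => -(g y)⁻¹) (N t) t := by
    intro t ht
    have h0 : g t ≠ 0 := (hgpos t (Set.Ioo_subset_Icc_self ht)).ne'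
    have h1 := ((hd2 t ht).inv h0).neg
    exact h1.congr_deriv (by simp only [hN_def]; ring)
  have hN_cont : ContinuousOn N (Set.Icc a b) :=
    hg'c.div (hgc.pow 2) fun t ht => pow_ne_zero _ (hgpos t ht).ne'
  have hN_int : IntervalIntegrable N volume a b := by
    apply ContinuousOn.intervalIntegrable; rw [Set.uIcc_of_le hab]; exact hN_cont
  have hQc : ContinuousOn (fun y => -(g y)⁻¹) (Set.Icc a b) :=
    (hgc.inv₀ fun t ht => (hgpos t ht).ne').neg
  have hFTC2 : (∫ t in a..b, N t) = -(g b)⁻¹ - -(g a)⁻¹ :=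
    integral_eq_sub_of_hasDeriv_right_of_le hab hQc
      (fun t ht => (hQd t ht).hasDerivWithinAt) hN_int
  have haIcc : a ∈ Set.Icc a b := Set.left_mem_Icc.2 hab
  have hbIcc : b ∈ Set.Icc a b := Set.right_mem_Icc.2 hab
  have hinv_a : (g a)⁻¹ ≤ 1 / A := by rw [one_div]; exact inv_anti₀ hA (hge a haIcc)
  have hinv_b : (g b)⁻¹ ≤ 1 / A := by rw [one_div]; exact inv_anti₀ hA (hge b hbIcc)
  have hinv_a0 : 0 < (g a)⁻¹ := inv_pos.2 (hgpos a haIcc)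
  have hinv_b0 : 0 < (g b)⁻¹ := inv_pos.2 (hgpos b hbIcc)
  have heqM : ∀ t, ‖w t * e t‖ = M t := by
    intro t
    rw [norm_mul, he_norm, mul_one, hw_def, hM_def]
    simp only [norm_mul, norm_neg, Complex.norm_I, norm_inv, one_mul,
      norm_pow, Complex.norm_real, Real.norm_eq_abs, sq_abs]
    rw [div_eq_inv_mul, mul_comm]
  have hMN : (∫ t in a..b, M t) ≤ 1 / A := by
    rcases hsgn with hs | hs
    · have hcongr : (∫ t in a..b, M t) = ∫ t in a..b, N t := by
        apply intervalIntegral.integral_congr_ae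
        rw [Set.uIoc_of_le hab]
        filter_upwards [((Set.countable_singleton b).ae_notMem volume)] with t htb ht
        have htoo : t ∈ Set.Ioo a b := ⟨ht.1, lt_of_le_of_ne ht.2 (by simpa using htb)⟩
        simp [hM_def, hN_def, abs_of_nonneg (hs t htoo)]
      rw [hcongr, hFTC2]; linarith
    · have hcongr : (∫ t in a..b, M t) = ∫ t in a..b, -N t := by
        apply intervalIntegral.integral_congr_ae
        rw [Set.uIoc_of_le hab]
        filter_upwards [((Set.countable_singleton b).ae_notMem volume)] with t htb ht
        have htoo : t ∈ Set.Ioo a b := ⟨ht.1, lt_of_le_of_ne ht.2 (by simpa using htb)⟩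
        simp [hM_def, hN_def, abs_of_nonpos (hs t htoo), neg_div]
      rw [hcongr, intervalIntegral.integral_neg, hFTC2]; linarith
  have hvar : ‖∫ t in a..b, w t * e t‖ ≤ 1 / A := by
    refine (intervalIntegral.norm_integral_le_integral_norm hab).trans ?_
    calc (∫ t in a..b, ‖w t * e t‖) = ∫ t in a..b, M t := by
          apply intervalIntegral.integral_congr; intro t _; exact heqM t
      _ ≤ 1 / A := hMN
  have hPn : ∀ t ∈ Set.Icc a b, ‖P t‖ ≤ 1 / A := by
    intro t ht
    rw [hP_def]
    simp only [norm_mul, he_norm, mul_one]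
    exact hψ_norm t ht
  have h2 : ‖∫ t in a..b, e t‖ ≤ ‖P b‖ + ‖P a‖ + ‖∫ t in a..b, w t * e t‖ := by
    rw [heq]
    exact (norm_sub_le _ _).trans (add_le_add (norm_sub_le _ _) le_rfl)
  have h3A : (3 : ℝ) / A = 1 / A + 1 / A + 1 / A := by ring
  rw [h3A]
  exact h2.trans (add_le_add (add_le_add (hPn b hbIcc) (hPn a haIcc)) hvar)

lemma aux_le_on_Icc' {f : ℝ → ℝ} {a b A : ℝ} (hab : a < b) (hc : ContinuousOn f (Set.Icc a b))
    (hf : ∀ t ∈ Set.Ioo a b, A ≤ f t) : ∀ t ∈ Set.Icc a b, A ≤ f t := by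
  intro t ht
  have h1 : ContinuousWithinAt f (Set.Ioo a b) t := (hc t ht).mono Set.Ioo_subset_Icc_self
  have hne : (𝓝[Set.Ioo a b] t).NeBot := by
    rw [← mem_closure_iff_nhdsWithin_neBot, closure_Ioo hab.ne]
    exact ht
  exact ge_of_tendsto h1 (eventually_mem_nhdsWithin.mono fun y hy => hf y hy)

lemma aux_intervalIntegral_conj {f : ℝ → ℂ} {a b : ℝ} :
    ∫ x in a..b, (starRingEnd ℂ) (f x) = (starRingEnd ℂ) (∫ x in a..b, f x) := by
  simp only [intervalIntegral, ← integral_conj, map_sub]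

lemma kernel_half {a b A : ℝ} (hab : a < b) (hA : 0 < A) (h g g' : ℝ → ℝ)
    (hhc : ContinuousOn h (Set.Icc a b))
    (hgc : ContinuousOn g (Set.Icc a b))
    (hg'c : ContinuousOn g' (Set.Icc a b))
    (hd : ∀ t ∈ Set.Ioo a b, HasDerivAt h (g t) t)
    (hd2 : ∀ t ∈ Set.Ioo a b, HasDerivAt g (g' t) t)
    (hbig : ∀ t ∈ Set.Ioo a b, A < |g t|)
    (hsgn : (∀ t ∈ Set.Ioo a b, 0 ≤ g' t) ∨ (∀ t ∈ Set.Ioo a b, g' t ≤ 0)) :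
    ∀ x ∈ Set.Icc a b, ‖∫ t in a..x, Complex.exp (Complex.I * (h t : ℂ))‖ ≤ 3 / A := by
  have hm : (a + b) / 2 ∈ Set.Ioo a b := ⟨by linarith, by linarith⟩
  have hIVT : ∀ t ∈ Set.Ioo a b, ∀ s ∈ Set.Ioo a b, g t < 0 → 0 < g s → False := by
    intro t ht s hs hgt hgs
    have hsub : Set.uIcc t s ⊆ Set.Ioo a b := Set.ordConnected_Ioo.uIcc_subset ht hs
    have h0 : (0 : ℝ) ∈ Set.uIcc (g t) (g s) := Set.mem_uIcc.2 (Or.inl ⟨hgt.le, hgs.le⟩)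
    obtain ⟨z, hz, hz0⟩ :=
      intermediate_value_uIcc (hgc.mono (hsub.trans Set.Ioo_subset_Icc_self)) h0
    have := hbig z (hsub hz)
    rw [hz0] at this
    simp at this
    linarith
  have hdicho : (∀ t ∈ Set.Ioo a b, A < g t) ∨ (∀ t ∈ Set.Ioo a b, A < -g t) := by
    rcases lt_or_ge 0 (g ((a + b) / 2)) with hp | hn
    · left
      intro t ht
      rcases le_or_gt (g t) 0 with h0 | h0
      · rcases eq_or_lt_of_le h0 with heq | hlt
        · have := hbig t ht; rw [heq] at this; simp at this; linarith
        · exact absurd (hIVT t ht _ hm hlt hp) (not_false)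
      · have := hbig t ht; rwa [abs_of_pos h0] at this
    · right
      have hn' : g ((a + b) / 2) < 0 := by
        rcases eq_or_lt_of_le hn with heq | hlt
        · have := hbig _ hm; rw [heq] at this; simp at this; linarith
        · exact hlt
      intro t ht
      rcases lt_or_ge 0 (g t) with h0 | h0
      · exact absurd (hIVT _ hm t ht hn' h0) (not_false)
      · have := hbig t ht; rwa [abs_of_nonpos h0] at this
  intro x hx
  rcases eq_or_lt_of_le hx.1 with rfl | hax
  · simp; positivity
  have hIccs : Set.Icc a x ⊆ Set.Icc a b := Set.Icc_subset_Icc_right hx.2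
  have hIoos : Set.Ioo a x ⊆ Set.Ioo a b := Set.Ioo_subset_Ioo_right hx.2
  rcases hdicho with hpos | hneg
  · have hge : ∀ t ∈ Set.Icc a b, A ≤ g t :=
      aux_le_on_Icc' hab hgc fun t ht => (hpos t ht).le
    exact kernel_pos hax.le hA h g g' (hhc.mono hIccs) (hgc.mono hIccs) (hg'c.mono hIccs)
      (fun t ht => hd t (hIoos ht)) (fun t ht => hd2 t (hIoos ht))
      (fun t ht => hge t (hIccs ht))
      (hsgn.imp (fun hs t ht => hs t (hIoos ht)) (fun hs t ht => hs t (hIoos ht)))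
  · have hge : ∀ t ∈ Set.Icc a b, A ≤ -g t :=
      aux_le_on_Icc' hab hgc.neg fun t ht => (hneg t ht).le
    have hb := kernel_pos hax.le hA (fun y => -h y) (fun y => -g y) (fun y => -g' y)
      (hhc.neg.mono hIccs) (hgc.neg.mono hIccs) (hg'c.neg.mono hIccs)
      (fun t ht => (hd t (hIoos ht)).neg) (fun t ht => (hd2 t (hIoos ht)).neg)
      (fun t ht => hge t (hIccs ht))
      (hsgn.symm.imp (fun hs t ht => by simpa using hs t (hIoos ht))
        (fun hs t ht => by simpa using hs t (hIoos ht)))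
    have hconj : ∀ t : ℝ, Complex.exp (Complex.I * ((-h t : ℝ) : ℂ))
        = (starRingEnd ℂ) (Complex.exp (Complex.I * (h t : ℂ))) := by
      intro t
      rw [← Complex.exp_conj]
      congr 1
      simp [Complex.conj_I]
    have : (∫ t in a..x, Complex.exp (Complex.I * ((-h t : ℝ) : ℂ)))
        = (starRingEnd ℂ) (∫ t in a..x, Complex.exp (Complex.I * (h t : ℂ))) := by
      rw [← aux_intervalIntegral_conj]
      apply intervalIntegral.integral_congr
      intro t _
      exact hconj t
    rw [this] at hb
    rwa [RCLike.norm_conj] at hb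

lemma kernel_full {a b A : ℝ} {h : ℝ → ℝ} (hab : a < b) (hA : 0 < A)
    (hh : ContDiffOn ℝ 2 h (Set.Icc a b))
    (hmono : MonotoneOn (deriv h) (Set.Icc a b) ∨ AntitoneOn (deriv h) (Set.Icc a b))
    (hbig : ∀ x ∈ Set.Icc a b, A < |deriv h x|) :
    ∀ x ∈ Set.Icc a b, ‖∫ t in a..x, Complex.exp (Complex.I * (h t : ℂ))‖ ≤ 3 / A := by
  set g : ℝ → ℝ := derivWithin h (Set.Icc a b) with hg_def
  have hudiff : UniqueDiffOn ℝ (Set.Icc a b) := uniqueDiffOn_Icc hab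
  have hg1 : ContDiffOn ℝ 1 g (Set.Icc a b) := hh.derivWithin hudiff (by norm_num)
  have hgc : ContinuousOn g (Set.Icc a b) := hg1.continuousOn
  set g' : ℝ → ℝ := derivWithin g (Set.Icc a b) with hg'_def
  have hg'c : ContinuousOn g' (Set.Icc a b) :=
    (hg1.derivWithin (m := 0) hudiff (by norm_num)).continuousOn
  have hnhds : ∀ t ∈ Set.Ioo a b, Set.Icc a b ∈ 𝓝 t := fun t ht => Icc_mem_nhds ht.1 ht.2
  have heq : ∀ t ∈ Set.Ioo a b, g t = deriv h t := fun t ht =>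
    derivWithin_of_mem_nhds (hnhds t ht)
  have hd : ∀ t ∈ Set.Ioo a b, HasDerivAt h (g t) t := by
    intro t ht
    have h1 : DifferentiableAt ℝ h t :=
      (hh.differentiableOn (by norm_num) t (Set.Ioo_subset_Icc_self ht)).differentiableAt
        (hnhds t ht)
    rw [heq t ht]
    exact h1.hasDerivAt
  have hd2 : ∀ t ∈ Set.Ioo a b, HasDerivAt g (g' t) t := by
    intro t ht
    have h1 : DifferentiableAt ℝ g t :=
      (hg1.differentiableOn one_ne_zero t (Set.Ioo_subset_Icc_self ht)).differentiableAt (hnhds t ht)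
    rw [show g' t = deriv g t from derivWithin_of_mem_nhds (hnhds t ht)]
    exact h1.hasDerivAt
  have hbig' : ∀ t ∈ Set.Ioo a b, A < |g t| := by
    intro t ht
    rw [heq t ht]
    exact hbig t (Set.Ioo_subset_Icc_self ht)
  have hsgn : (∀ t ∈ Set.Ioo a b, 0 ≤ g' t) ∨ (∀ t ∈ Set.Ioo a b, g' t ≤ 0) := by
    rcases hmono with hmn | hmn
    · left
      intro t ht
      refine aux_deriv_nonneg_of_monotoneOn ht ?_ (hd2 t ht)
      intro x hx y hy hxy
      rw [heq x hx, heq y hy]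
      exact hmn (Set.Ioo_subset_Icc_self hx) (Set.Ioo_subset_Icc_self hy) hxy
    · right
      intro t ht
      have : 0 ≤ -g' t := by
        refine aux_deriv_nonneg_of_monotoneOn ht ?_ (hd2 t ht).neg
        intro x hx y hy hxy
        simp only [Pi.neg_apply, neg_le_neg_iff]
        rw [heq x hx, heq y hy]
        exact hmn (Set.Ioo_subset_Icc_self hx) (Set.Ioo_subset_Icc_self hy) hxy
      linarith
  exact kernel_half hab hA h g g' (hh.continuousOn) hgc hg'c hd hd2 hbig' hsgn
/-- Van der Corput lemma for first derivatives: if `h` is C² on `[a,b]` with `h'`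
monotone and `|h'| > A > 0` there, and `φ` is C¹ on `[a,b]`, then
`|∫ e^{ih} φ| ≤ c A⁻¹ (|φ(b)| + ∫ |φ'|)` for an absolute constant `c`. -/
theorem stmt_0 :
    ∃ c > (0 : ℝ), ∀ (a b A : ℝ) (h : ℝ → ℝ) (φ : ℝ → ℂ),
      a < b → 0 < A →
      ContDiffOn ℝ 2 h (Set.Icc a b) →
      (MonotoneOn (deriv h) (Set.Icc a b) ∨ AntitoneOn (deriv h) (Set.Icc a b)) →
      (∀ x ∈ Set.Icc a b, A < |deriv h x|) →
      ContDiffOn ℝ 1 φ (Set.Icc a b) →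
      ‖∫ x in a..b, Complex.exp (Complex.I * (h x : ℂ)) * φ x‖ ≤
        c * A⁻¹ * (‖φ b‖ + ∫ x in a..b, ‖deriv φ x‖) := by
  refine ⟨3, by norm_num, ?_⟩
  intro a b A h φ hab hA hh hmono hbig hφ
  set e : ℝ → ℂ := fun t => Complex.exp (Complex.I * (h t : ℂ)) with he_def
  have hkernel : ∀ x ∈ Set.Icc a b, ‖∫ t in a..x, e t‖ ≤ 3 / A :=
    kernel_full hab hA hh hmono hbig
  have hudiff : UniqueDiffOn ℝ (Set.Icc a b) := uniqueDiffOn_Icc hab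
  have hnhds : ∀ t ∈ Set.Ioo a b, Set.Icc a b ∈ 𝓝 t := fun t ht => Icc_mem_nhds ht.1 ht.2
  have he_cont : ContinuousOn e (Set.Icc a b) :=
    Complex.continuous_exp.comp_continuousOn
      (continuousOn_const.mul (Complex.continuous_ofReal.comp_continuousOn hh.continuousOn))
  set F : ℝ → ℂ := fun x => ∫ t in a..x, e t with hF_def
  have he_ion : IntegrableOn e (Set.uIcc a b) volume := by
    rw [Set.uIcc_of_le hab.le]
    exact he_cont.integrableOn_Icc
  have hFc : ContinuousOn F (Set.Icc a b) := by
    have := continuousOn_primitive_interval (μ := volume) (a := a) (b := b) (f := e) he_ion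
    rwa [Set.uIcc_of_le hab.le] at this
  have hFd : ∀ x ∈ Set.Ioo a b, HasDerivAt F (e x) x := by
    intro x hx
    refine integral_hasDerivAt_right ?_ ?_ ?_
    · exact ContinuousOn.intervalIntegrable
        (by rw [Set.uIcc_of_le hx.1.le]; exact he_cont.mono (Set.Icc_subset_Icc_right hx.2.le))
    · exact ⟨Set.Icc a b, hnhds x hx, he_cont.aestronglyMeasurable measurableSet_Icc⟩
    · exact he_cont.continuousAt (hnhds x hx)
  -- φ facts
  have hφc : ContinuousOn φ (Set.Icc a b) := hφ.continuousOn
  have hdφ : ∀ x ∈ Set.Ioo a b, HasDerivAt φ (deriv φ x) x := by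
    intro x hx
    exact ((hφ.differentiableOn one_ne_zero x (Set.Ioo_subset_Icc_self hx)).differentiableAt
      (hnhds x hx)).hasDerivAt
  set dW : ℝ → ℂ := derivWithin φ (Set.Icc a b) with hdW_def
  have hdWc : ContinuousOn dW (Set.Icc a b) :=
    (hφ.derivWithin (m := 0) hudiff (by norm_num)).continuousOn
  have hderiv_eq : ∀ t ∈ Set.Ioo a b, deriv φ t = dW t := fun t ht =>
    (derivWithin_of_mem_nhds (hnhds t ht)).symm
  have hae : ∀ᵐ t ∂(volume.restrict (Set.uIoc a b)), deriv φ t = dW t := by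
    rw [Set.uIoc_of_le hab.le]
    have h1 : ∀ᵐ t ∂(volume.restrict (Set.Ioc a b)), t ∈ Set.Ioc a b :=
      ae_restrict_mem measurableSet_Ioc
    have h2 : ∀ᵐ t ∂(volume.restrict (Set.Ioc a b)), t ∉ ({b} : Set ℝ) :=
      ae_restrict_of_ae ((Set.countable_singleton b).ae_notMem volume)
    filter_upwards [h1, h2] with t ht htb
    exact hderiv_eq t ⟨ht.1, lt_of_le_of_ne ht.2 (by simpa using htb)⟩
  have hInt_FdW : IntervalIntegrable (fun t => F t * dW t) volume a b :=
    ContinuousOn.intervalIntegrable (by rw [Set.uIcc_of_le hab.le]; exact hFc.mul hdWc)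
  have hInt_Fφ' : IntervalIntegrable (fun t => F t * deriv φ t) volume a b :=
    hInt_FdW.congr_ae (hae.mono fun t ht => by simp only [ht])
  have hInt_eφ : IntervalIntegrable (fun t => e t * φ t) volume a b :=
    ContinuousOn.intervalIntegrable (by rw [Set.uIcc_of_le hab.le]; exact he_cont.mul hφc)
  have hInt_dWnorm : IntervalIntegrable (fun t => ‖dW t‖) volume a b :=
    ContinuousOn.intervalIntegrable (by rw [Set.uIcc_of_le hab.le]; exact hdWc.norm)
  have hInt_φ'norm : IntervalIntegrable (fun t => ‖deriv φ t‖) volume a b :=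
    hInt_dWnorm.congr_ae (hae.mono fun t ht => by simp only [ht])
  -- integration by parts
  have hP : ∀ t ∈ Set.Ioo a b, HasDerivAt (fun y => F y * φ y)
      (e t * φ t + F t * deriv φ t) t := fun t ht => (hFd t ht).mul (hdφ t ht)
  have hFTC : (∫ t in a..b, (e t * φ t + F t * deriv φ t)) = F b * φ b - F a * φ a :=
    integral_eq_sub_of_hasDeriv_right_of_le hab.le (hFc.mul hφc)
      (fun t ht => (hP t ht).hasDerivWithinAt) (hInt_eφ.add hInt_Fφ')
  have hFa : F a = 0 := intervalIntegral.integral_same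
  rw [integral_add hInt_eφ hInt_Fφ', hFa, zero_mul, sub_zero] at hFTC
  have heq2 : (∫ t in a..b, e t * φ t) = F b * φ b - ∫ t in a..b, F t * deriv φ t := by
    rw [← hFTC]; ring
  -- estimates
  have hFb : ‖F b‖ ≤ 3 / A := hkernel b (Set.right_mem_Icc.2 hab.le)
  have h1 : ‖F b * φ b‖ ≤ 3 / A * ‖φ b‖ := by
    rw [norm_mul]
    exact mul_le_mul_of_nonneg_right hFb (norm_nonneg _)
  have h2 : ‖∫ t in a..b, F t * deriv φ t‖ ≤ 3 / A * ∫ t in a..b, ‖deriv φ t‖ := by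
    refine (intervalIntegral.norm_integral_le_integral_norm hab.le).trans ?_
    rw [← intervalIntegral.integral_const_mul]
    refine intervalIntegral.integral_mono_on hab.le hInt_Fφ'.norm
      (hInt_φ'norm.const_mul _) ?_
    intro t ht
    rw [norm_mul]
    exact mul_le_mul_of_nonneg_right (hkernel t ht) (norm_nonneg _)
  calc ‖∫ x in a..b, e x * φ x‖
      ≤ ‖F b * φ b‖ + ‖∫ t in a..b, F t * deriv φ t‖ := by
        rw [heq2]; exact norm_sub_le _ _
    _ ≤ 3 / A * ‖φ b‖ + 3 / A * ∫ t in a..b, ‖deriv φ t‖ := add_le_add h1 h2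
    _ = 3 * A⁻¹ * (‖φ b‖ + ∫ x in a..b, ‖deriv φ x‖) := by ring
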